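/- The formal identity θ̂(t) = exp(∑_{ℓ≥0} γ_ℓ t^{p^ℓ}) holds, where θ̂(t) = ∏_{i≥0} θ(t^{p^i}), θ(t) = E(γt), E is the Artin–Hasse exponential, and γ_ℓ = ∑_{i=0}^ℓ γ^{p^i}/p^i, assuming γ is a root of ∑_{n≥0} t^{p^n}/p^n = 0. -/

import Mathlib

set_option linter.unusedSectionVars false
set_option linter.unusedVariables false
set_option linter.unreachableTactic false
set_option linter.unusedTactic false
set_option linter.unnecessarySeqFocus false
set_option maxHeartbeats 1000000

/-!
STATEMENT 2: The formal identity `θ̂(t) = exp (∑_{ℓ ≥ 0} γ_ℓ t^(p^ℓ))`, where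
`θ̂(t) = ∏_{i ≥ 0} θ(t^(p^i))`, `θ(t) = E(γ t)`, `E` is the Artin–Hasse
exponential and `γ_ℓ = ∑_{i=0}^ℓ γ^(p^i)/p^i`, assuming `γ` is a root of
`∑_{n ≥ 0} t^(p^n)/p^n = 0`.

The infinite product `∏_{i ≥ 0} θ(t^(p^i))` makes sense as a formal power
series because `θ(t^(p^i)) ≡ 1 (mod t^(p^i))`: for a fixed degree `d` the
partial products stabilize as soon as `p^i > d`.  The identity is stated
coefficientwise through this stabilization.
-/

open PowerSeries

variable {K : Type*} [NormedField K] [CharZero K] [CompleteSpace K]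

/-- Formal exponential of a power series with zero constant term:
`coeff n (exp f) = ∑_{m ≤ n} coeff n (f^m) / m!`. -/
noncomputable def expOf (f : PowerSeries K) : PowerSeries K :=
  PowerSeries.mk fun n =>
    ∑ m ∈ Finset.range (n + 1), ((m.factorial : K)⁻¹) * PowerSeries.coeff n (f ^ m)

/-- Substitution `t ↦ t^m` in a formal power series. -/
noncomputable def compPow (f : PowerSeries K) (m : ℕ) : PowerSeries K :=
  PowerSeries.mk fun k => if h : m ∣ k then PowerSeries.coeff (k / m) f else 0

open Classical in
/-- The series `∑_{n ≥ 0} γ^(p^n) t^(p^n) / p^n`, so that `E(γ t) = exp` of it. -/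
noncomputable def gammaLog (p : ℕ) (γ : K) : PowerSeries K :=
  PowerSeries.mk fun k =>
    if h : ∃ n : ℕ, k = p ^ n then γ ^ k / (p : K) ^ h.choose else 0

open Classical in
/-- The series `∑_{ℓ ≥ 0} γ_ℓ t^(p^ℓ)` where `γ_ℓ = ∑_{i=0}^ℓ γ^(p^i)/p^i`. -/
noncomputable def gammaEllSeries (p : ℕ) (γ : K) : PowerSeries K :=
  PowerSeries.mk fun k =>
    if h : ∃ ℓ : ℕ, k = p ^ ℓ then
      ∑ i ∈ Finset.range (h.choose + 1), γ ^ (p ^ i) / (p : K) ^ i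
    else 0

/-! ### Auxiliary lemmas -/

lemma coeff_expOf (f : PowerSeries K) (n : ℕ) :
    PowerSeries.coeff n (expOf f) =
      ∑ m ∈ Finset.range (n + 1), ((m.factorial : K)⁻¹) * PowerSeries.coeff n (f ^ m) := by
  rw [expOf, PowerSeries.coeff_mk]

lemma coeff_compPow (f : PowerSeries K) (m k : ℕ) :
    PowerSeries.coeff k (compPow f m) =
      if m ∣ k then PowerSeries.coeff (k / m) f else 0 := by
  rw [compPow, PowerSeries.coeff_mk, dite_eq_ite]

lemma coeff_pow_eq_zero {f : PowerSeries K} (hf : PowerSeries.constantCoeff f = 0)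
    {k n : ℕ} (h : k < n) : PowerSeries.coeff k (f ^ n) = 0 :=
  PowerSeries.X_pow_dvd_iff.mp (pow_dvd_pow_of_dvd (PowerSeries.X_dvd_iff.mpr hf) n) k h

lemma coeff_mul_pow_eq_zero {f g : PowerSeries K}
    (hf : PowerSeries.constantCoeff f = 0) (hg : PowerSeries.constantCoeff g = 0)
    {k a b : ℕ} (h : k < a + b) : PowerSeries.coeff k (f ^ a * g ^ b) = 0 := by
  have : (X : PowerSeries K) ^ (a + b) ∣ f ^ a * g ^ b := by
    rw [pow_add]
    exact mul_dvd_mul (pow_dvd_pow_of_dvd (PowerSeries.X_dvd_iff.mpr hf) a)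
      (pow_dvd_pow_of_dvd (PowerSeries.X_dvd_iff.mpr hg) b)
  exact PowerSeries.X_pow_dvd_iff.mp this k h

lemma constantCoeff_compPow {f : PowerSeries K} (m : ℕ)
    (hf : PowerSeries.constantCoeff f = 0) :
    PowerSeries.constantCoeff (compPow f m) = 0 := by
  rw [← PowerSeries.coeff_zero_eq_constantCoeff_apply, coeff_compPow,
    if_pos (dvd_zero m), Nat.zero_div, PowerSeries.coeff_zero_eq_constantCoeff_apply, hf]

lemma compPow_one {m : ℕ} (hm : m ≠ 0) : compPow (1 : PowerSeries K) m = 1 := by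
  ext k
  rw [coeff_compPow]
  by_cases hk : m ∣ k
  · rw [if_pos hk]
    rcases Nat.eq_zero_or_pos k with rfl | hkpos
    · simp
    · have h1 : k / m ≠ 0 := by
        obtain ⟨c, rfl⟩ := hk
        rw [Nat.mul_div_cancel_left c (Nat.pos_of_ne_zero hm)]
        rintro rfl; simp at hkpos
      rw [PowerSeries.coeff_one, PowerSeries.coeff_one, if_neg h1, if_neg hkpos.ne']
  · rw [if_neg hk, PowerSeries.coeff_one, if_neg]
    rintro rfl; exact hk (dvd_zero m)

lemma compPow_mul (f g : PowerSeries K) {m : ℕ} (hm : m ≠ 0) :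
    compPow (f * g) m = compPow f m * compPow g m := by
  ext k
  rw [coeff_compPow, PowerSeries.coeff_mul]
  by_cases hk : m ∣ k
  · obtain ⟨c, rfl⟩ := hk
    rw [if_pos (Dvd.intro c rfl), Nat.mul_div_cancel_left c (Nat.pos_of_ne_zero hm),
      PowerSeries.coeff_mul, Finset.Nat.sum_antidiagonal_eq_sum_range_succ_mk,
      Finset.Nat.sum_antidiagonal_eq_sum_range_succ_mk]
    simp_rw [coeff_compPow]
    have h1 : ∑ x ∈ Finset.range (m * c + 1),
        (if m ∣ x then PowerSeries.coeff (x / m) f else 0) *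
          (if m ∣ m * c - x then PowerSeries.coeff ((m * c - x) / m) g else 0)
        = ∑ x ∈ (Finset.range (m * c + 1)).filter (fun x => m ∣ x),
            (if m ∣ x then PowerSeries.coeff (x / m) f else 0) *
              (if m ∣ m * c - x then PowerSeries.coeff ((m * c - x) / m) g else 0) := by
      refine (Finset.sum_subset (Finset.filter_subset _ _) ?_).symm
      intro x hx hx'
      have : ¬ m ∣ x := by
        intro hd; exact hx' (Finset.mem_filter.mpr ⟨hx, hd⟩)
      rw [if_neg this, zero_mul]
    have h2 : (Finset.range (m * c + 1)).filter (fun x => m ∣ x)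
        = (Finset.range (c + 1)).image (fun a => m * a) := by
      ext x
      simp only [Finset.mem_filter, Finset.mem_range, Finset.mem_image, Nat.lt_succ_iff]
      constructor
      · rintro ⟨hx, a, rfl⟩
        exact ⟨a, Nat.le_of_mul_le_mul_left hx (Nat.pos_of_ne_zero hm), rfl⟩
      · rintro ⟨a, ha, rfl⟩
        exact ⟨Nat.mul_le_mul_left m ha, Dvd.intro a rfl⟩
    rw [h1, h2, Finset.sum_image (fun a _ b _ h =>
      Nat.eq_of_mul_eq_mul_left (Nat.pos_of_ne_zero hm) h)]
    refine Finset.sum_congr rfl ?_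
    intro a ha
    have ha' : a ≤ c := Nat.lt_succ_iff.mp (Finset.mem_range.mp ha)
    have hsub : m * c - m * a = m * (c - a) := by rw [Nat.mul_sub]
    rw [if_pos (Dvd.intro a rfl), Nat.mul_div_cancel_left a (Nat.pos_of_ne_zero hm),
      hsub, if_pos (Dvd.intro (c - a) rfl),
      Nat.mul_div_cancel_left (c - a) (Nat.pos_of_ne_zero hm)]
  · rw [if_neg hk, PowerSeries.coeff_mul]
    symm
    apply Finset.sum_eq_zero
    intro x hx
    have hx' : x.1 + x.2 = k := Finset.HasAntidiagonal.mem_antidiagonal.mp hx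
    rw [coeff_compPow, coeff_compPow]
    by_cases h1 : m ∣ x.1
    · have h2 : ¬ m ∣ x.2 := fun h2 => hk (hx' ▸ Nat.dvd_add h1 h2)
      rw [if_neg h2, mul_zero]
    · rw [if_neg h1, zero_mul]

lemma compPow_pow (f : PowerSeries K) {m : ℕ} (hm : m ≠ 0) (n : ℕ) :
    compPow (f ^ n) m = (compPow f m) ^ n := by
  induction n with
  | zero => simpa using compPow_one hm
  | succ n ih => rw [pow_succ, pow_succ, compPow_mul _ _ hm, ih]

lemma expOf_zero : expOf (0 : PowerSeries K) = 1 := by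
  ext n
  rw [coeff_expOf]
  rcases n with _ | n
  · simp
  · rw [Finset.sum_eq_zero, PowerSeries.coeff_one, if_neg (Nat.succ_ne_zero n)]
    intro m hm
    rcases Nat.eq_zero_or_pos m with rfl | hmpos
    · simp [PowerSeries.coeff_one]
    · rw [zero_pow hmpos.ne', map_zero, mul_zero]

lemma coeff_expOf_ext {f : PowerSeries K} (hf : PowerSeries.constantCoeff f = 0)
    {a n : ℕ} (ha : a ≤ n) :
    PowerSeries.coeff a (expOf f) =
      ∑ m ∈ Finset.range (n + 1), ((m.factorial : K)⁻¹) * PowerSeries.coeff a (f ^ m) := by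
  rw [coeff_expOf]
  apply Finset.sum_subset (Finset.range_subset_range.mpr (by omega))
  intro j hj hj'
  have : a < j := by
    simp only [Finset.mem_range] at hj hj'; omega
  rw [coeff_pow_eq_zero hf this, mul_zero]

lemma expOf_add {f g : PowerSeries K} (hf : PowerSeries.constantCoeff f = 0)
    (hg : PowerSeries.constantCoeff g = 0) :
    expOf (f + g) = expOf f * expOf g := by
  ext n
  rw [coeff_expOf, PowerSeries.coeff_mul]
  have hR : ∑ x ∈ Finset.HasAntidiagonal.antidiagonal n,
      PowerSeries.coeff x.1 (expOf f) * PowerSeries.coeff x.2 (expOf g)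
      = ∑ j ∈ Finset.range (n + 1), ∑ k ∈ Finset.range (n + 1 - j),
          ((j.factorial : K)⁻¹ * (k.factorial : K)⁻¹) *
            PowerSeries.coeff n (f ^ j * g ^ k) := by
    have step1 : ∀ x ∈ Finset.HasAntidiagonal.antidiagonal n,
        PowerSeries.coeff x.1 (expOf f) * PowerSeries.coeff x.2 (expOf g)
        = ∑ j ∈ Finset.range (n + 1), ∑ k ∈ Finset.range (n + 1),
            ((j.factorial : K)⁻¹ * (k.factorial : K)⁻¹) *
              (PowerSeries.coeff x.1 (f ^ j) * PowerSeries.coeff x.2 (g ^ k)) := by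
      intro x hx
      have hx' : x.1 + x.2 = n := Finset.HasAntidiagonal.mem_antidiagonal.mp hx
      rw [coeff_expOf_ext hf (by omega : x.1 ≤ n), coeff_expOf_ext hg (by omega : x.2 ≤ n),
        Finset.sum_mul_sum]
      apply Finset.sum_congr rfl; intro j _
      apply Finset.sum_congr rfl; intro k _
      ring
    rw [Finset.sum_congr rfl step1, Finset.sum_comm]
    apply Finset.sum_congr rfl
    intro j _
    rw [Finset.sum_comm]
    have inner : ∀ k ∈ Finset.range (n + 1),
        ∑ x ∈ Finset.HasAntidiagonal.antidiagonal n,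
          ((j.factorial : K)⁻¹ * (k.factorial : K)⁻¹) *
            (PowerSeries.coeff x.1 (f ^ j) * PowerSeries.coeff x.2 (g ^ k))
        = ((j.factorial : K)⁻¹ * (k.factorial : K)⁻¹) *
            PowerSeries.coeff n (f ^ j * g ^ k) := by
      intro k _
      rw [PowerSeries.coeff_mul, Finset.mul_sum]
    rw [Finset.sum_congr rfl inner]
    refine (Finset.sum_subset (Finset.range_subset_range.mpr (by omega)) ?_).symm
    intro k hk hk'
    have hkj : n < j + k := by
      simp only [Finset.mem_range] at hk hk'; omega
    rw [coeff_mul_pow_eq_zero hf hg hkj, mul_zero]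
  rw [hR]
  have hadd : ∀ m ∈ Finset.range (n + 1),
      ((m.factorial : K)⁻¹) * PowerSeries.coeff n ((f + g) ^ m)
      = ∑ j ∈ Finset.range (m + 1),
          ((j.factorial : K)⁻¹ * ((m - j).factorial : K)⁻¹) *
            PowerSeries.coeff n (f ^ j * g ^ (m - j)) := by
    intro m _
    rw [add_pow, map_sum, Finset.mul_sum]
    apply Finset.sum_congr rfl
    intro j hj
    have hjm : j ≤ m := Nat.lt_succ_iff.mp (Finset.mem_range.mp hj)
    have hfac : ((m.factorial : K))⁻¹ * (m.choose j : K)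
        = (j.factorial : K)⁻¹ * ((m - j).factorial : K)⁻¹ := by
      have hn := Nat.choose_mul_factorial_mul_factorial hjm
      have hc : ((m.choose j : K) * (j.factorial : K) * ((m - j).factorial : K))
          = (m.factorial : K) := by exact_mod_cast congrArg (Nat.cast : ℕ → K) hn
      have h1 : (j.factorial : K) ≠ 0 := Nat.cast_ne_zero.mpr j.factorial_ne_zero
      have h2 : ((m - j).factorial : K) ≠ 0 := Nat.cast_ne_zero.mpr (m - j).factorial_ne_zero
      have h3 : (m.factorial : K) ≠ 0 := Nat.cast_ne_zero.mpr m.factorial_ne_zero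
      field_simp
      linear_combination hc
    have hcast : ((m.choose j : ℕ) : PowerSeries K) = PowerSeries.C ((m.choose j : K)) :=
      (map_natCast PowerSeries.C (m.choose j)).symm
    rw [hcast, PowerSeries.coeff_mul_C, ← hfac]
    ring
  rw [Finset.sum_congr rfl hadd]
  rw [Finset.sum_sigma', Finset.sum_sigma']
  refine Finset.sum_nbij' (fun x => ⟨x.2, x.1 - x.2⟩) (fun y => ⟨y.1 + y.2, y.1⟩) ?_ ?_ ?_ ?_ ?_
  · intro x hx
    simp only [Finset.mem_sigma, Finset.mem_range] at hx ⊢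
    omega
  · intro y hy
    simp only [Finset.mem_sigma, Finset.mem_range] at hy ⊢
    omega
  · intro x hx
    simp only [Finset.mem_sigma, Finset.mem_range] at hx
    ext <;> simp <;> omega
  · intro y hy
    simp only [Finset.mem_sigma, Finset.mem_range] at hy
    ext <;> simp <;> omega
  · intro x hx
    rfl

lemma compPow_expOf {f : PowerSeries K} {m : ℕ} (hm : m ≠ 0)
    (hf : PowerSeries.constantCoeff f = 0) :
    compPow (expOf f) m = expOf (compPow f m) := by
  ext k
  rw [coeff_compPow, coeff_expOf]
  have hc : ∀ j : ℕ, PowerSeries.coeff k ((compPow f m) ^ j)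
      = if m ∣ k then PowerSeries.coeff (k / m) (f ^ j) else 0 := by
    intro j
    rw [← compPow_pow f hm j, coeff_compPow]
  by_cases hk : m ∣ k
  · rw [if_pos hk, coeff_expOf]
    simp_rw [hc, if_pos hk]
    refine Finset.sum_subset (Finset.range_subset_range.mpr ?_) ?_
    · have := Nat.div_le_self k m; omega
    · intro j hj hj'
      have h1 : k / m < j := by
        simp only [Finset.mem_range] at hj hj'; omega
      rw [coeff_pow_eq_zero hf h1, mul_zero]
  · rw [if_neg hk, coeff_expOf]
    symm
    apply Finset.sum_eq_zero
    intro j _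
    rw [hc, if_neg hk, mul_zero]

lemma coeff_expOf_congr {f g : PowerSeries K} {d : ℕ}
    (h : ∀ k ≤ d, PowerSeries.coeff k f = PowerSeries.coeff k g) :
    PowerSeries.coeff d (expOf f) = PowerSeries.coeff d (expOf g) := by
  have hpow : ∀ m : ℕ, ∀ k ≤ d, PowerSeries.coeff k (f ^ m) = PowerSeries.coeff k (g ^ m) := by
    intro m
    induction m with
    | zero => intro k _; simp
    | succ m ih =>
      intro k hk
      rw [pow_succ, pow_succ, PowerSeries.coeff_mul, PowerSeries.coeff_mul]
      apply Finset.sum_congr rfl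
      intro x hx
      have hx' : x.1 + x.2 = k := Finset.HasAntidiagonal.mem_antidiagonal.mp hx
      rw [ih x.1 (by omega), h x.2 (by omega)]
  rw [coeff_expOf, coeff_expOf]
  exact Finset.sum_congr rfl fun m _ => by rw [hpow m d le_rfl]

lemma coeff_gammaLog {p : ℕ} (hp : 1 < p) (γ : K) (n : ℕ) :
    PowerSeries.coeff (p ^ n) (gammaLog p γ) = γ ^ (p ^ n) / (p : K) ^ n := by
  rw [gammaLog, PowerSeries.coeff_mk]
  have hex : ∃ m : ℕ, p ^ n = p ^ m := ⟨n, rfl⟩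
  rw [dif_pos hex]
  have hn : hex.choose = n :=
    (Nat.pow_right_injective hp hex.choose_spec.symm)
  rw [hn]

lemma coeff_gammaLog_zero {p : ℕ} (γ : K) {k : ℕ} (hk : ¬ ∃ n : ℕ, k = p ^ n) :
    PowerSeries.coeff k (gammaLog p γ) = 0 := by
  rw [gammaLog, PowerSeries.coeff_mk, dif_neg hk]

lemma constantCoeff_gammaLog {p : ℕ} (hp : 1 < p) (γ : K) :
    PowerSeries.constantCoeff (gammaLog p γ) = 0 := by
  rw [← PowerSeries.coeff_zero_eq_constantCoeff_apply]
  apply coeff_gammaLog_zero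
  rintro ⟨n, hn⟩
  exact (Nat.pow_pos (n := n) (by omega)).ne' hn.symm

lemma coeff_gammaEll {p : ℕ} (hp : 1 < p) (γ : K) (ℓ : ℕ) :
    PowerSeries.coeff (p ^ ℓ) (gammaEllSeries p γ) =
      ∑ i ∈ Finset.range (ℓ + 1), γ ^ (p ^ i) / (p : K) ^ i := by
  rw [gammaEllSeries, PowerSeries.coeff_mk]
  have hex : ∃ m : ℕ, p ^ ℓ = p ^ m := ⟨ℓ, rfl⟩
  rw [dif_pos hex]
  have hn : hex.choose = ℓ :=
    (Nat.pow_right_injective hp hex.choose_spec.symm)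
  rw [hn]

lemma coeff_gammaEll_zero {p : ℕ} (γ : K) {k : ℕ} (hk : ¬ ∃ ℓ : ℕ, k = p ^ ℓ) :
    PowerSeries.coeff k (gammaEllSeries p γ) = 0 := by
  rw [gammaEllSeries, PowerSeries.coeff_mk, dif_neg hk]

/-- `θ̂(t) = ∏_{i ≥ 0} θ(t^(p^i)) = exp (∑_{ℓ ≥ 0} γ_ℓ t^(p^ℓ))`, stated
coefficientwise: in each degree `d` the (stabilized) partial products of the
left-hand side agree with the right-hand side. -/
theorem thetaHat_eq_exp_gammaEll
    (p : ℕ) (hp : p.Prime) (γ : K)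
    (hroot : ∑' n : ℕ, γ ^ (p ^ n) / (p : K) ^ n = 0)
    -- θ(t) := E(γ t), the Artin–Hasse exponential evaluated at γ t
    (θ : PowerSeries K) (hθ : θ = expOf (gammaLog p γ)) :
    ∀ d i : ℕ, d < p ^ i →
      PowerSeries.coeff d (∏ j ∈ Finset.range i, compPow θ (p ^ j)) =
        PowerSeries.coeff d (expOf (gammaEllSeries p γ)) := by
  intro d i hdi
  subst hθ
  have hp1 : 1 < p := hp.one_lt
  have hgl0 : PowerSeries.constantCoeff (gammaLog p γ) = 0 := constantCoeff_gammaLog hp1 γ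
  have hpj : ∀ j : ℕ, (p ^ j : ℕ) ≠ 0 := fun j => (Nat.pow_pos (n := j) (by omega)).ne'
  have key : ∀ N : ℕ,
      (∏ j ∈ Finset.range N, compPow (expOf (gammaLog p γ)) (p ^ j))
        = expOf (∑ j ∈ Finset.range N, compPow (gammaLog p γ) (p ^ j)) := by
    intro N
    induction N with
    | zero => simp [expOf_zero]
    | succ N ih =>
      have hsum0 : PowerSeries.constantCoeff
          (∑ j ∈ Finset.range N, compPow (gammaLog p γ) (p ^ j)) = 0 := by
        rw [map_sum]; exact Finset.sum_eq_zero fun j _ => constantCoeff_compPow _ hgl0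
      rw [Finset.prod_range_succ, Finset.sum_range_succ, ih,
        compPow_expOf (hpj N) hgl0, ← expOf_add hsum0 (constantCoeff_compPow _ hgl0)]
  rw [key i]
  apply coeff_expOf_congr
  intro k hk
  rw [map_sum]
  by_cases hke : ∃ ℓ : ℕ, k = p ^ ℓ
  · obtain ⟨ℓ, rfl⟩ := hke
    have hℓi : ℓ < i := by
      have h1 : p ^ ℓ < p ^ i := lt_of_le_of_lt hk hdi
      exact (Nat.pow_lt_pow_iff_right hp1).mp h1
    rw [coeff_gammaEll hp1]
    have hterm : ∀ j ∈ Finset.range i,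
        PowerSeries.coeff (p ^ ℓ) (compPow (gammaLog p γ) (p ^ j))
          = if j ≤ ℓ then γ ^ (p ^ (ℓ - j)) / (p : K) ^ (ℓ - j) else 0 := by
      intro j _
      rw [coeff_compPow]
      by_cases hjl : j ≤ ℓ
      · rw [if_pos (pow_dvd_pow p hjl), if_pos hjl, Nat.pow_div hjl (by omega)]
        exact coeff_gammaLog hp1 γ (ℓ - j)
      · rw [if_neg, if_neg hjl]
        intro hd
        exact hjl ((Nat.pow_dvd_pow_iff_le_right hp1).mp hd)
    rw [Finset.sum_congr rfl hterm, ← Finset.sum_filter]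
    have hfilter : (Finset.range i).filter (fun j => j ≤ ℓ) = Finset.range (ℓ + 1) := by
      ext j; simp only [Finset.mem_filter, Finset.mem_range]; omega
    rw [hfilter]
    have hrefl := Finset.sum_range_reflect (fun j => γ ^ (p ^ j) / (p : K) ^ j) (ℓ + 1)
    simpa using hrefl
  · rw [coeff_gammaEll_zero γ hke]
    apply Finset.sum_eq_zero
    intro j _
    rw [coeff_compPow]
    by_cases hd : p ^ j ∣ k
    · rw [if_pos hd]
      apply coeff_gammaLog_zero
      rintro ⟨n, hn⟩
      exact hke ⟨j + n, by rw [pow_add, ← hn, Nat.mul_div_cancel' hd]⟩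
    · rw [if_neg hd]
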